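/- On ℂⁿ (n ≥ 2) with standard complex structure J = i, let ∇ be the connection with only nonzero Christoffel symbols Γ²_{1̄1} = 1 and Γ^{2̄}_{11̄} = 1 (in complex index notation, all others including Γ²_{11̄} and Γ^{2̄}_{1̄1} vanishing). Then ∇ is a complex connection (∇J = 0), its curvature tensor vanishes identically, and its torsion equals T_∇ = dz¹ ∧ dz̄¹ ⊗ (∂_{z̄²} - ∂_{z²}), which is complex-antilinear in its first argument and complex-linear in its second argument (as a (2,1)-tensor on the underlying real manifold ℝ^{2n}). -/

import Mathlib

open Finset

noncomputable def pder17 {ι : Type*} [Fintype ι] [DecidableEq ι]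
    (i : ι) (f : (ι → ℝ) → ℝ) (p : ι → ℝ) : ℝ :=
  fderiv ℝ f p (Pi.single i 1)

/-- the standard complex structure on `ℝ^{2n} ≅ ℂⁿ`, coordinates `(k,0) ↦ x_{k+1}`,
`(k,1) ↦ y_{k+1}`. -/
def Jstd17 (n : ℕ) (i j : Fin n × Fin 2) : ℝ :=
  if i.1 = j.1 ∧ i.2 = 1 ∧ j.2 = 0 then 1
  else if i.1 = j.1 ∧ i.2 = 0 ∧ j.2 = 1 then -1 else 0

/-- the real Christoffel symbols of the connection on `ℂⁿ` with `Γ²_{1̄1} = 1`,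
`Γ^{2̄}_{11̄} = 1` and all other complex Christoffel symbols zero. -/
def Gam17 (n : ℕ) [NeZero n] (i j k : Fin n × Fin 2) : ℝ :=
  if i = ((1,0) : Fin n × Fin 2) ∧ j = ((0,0) : Fin n × Fin 2) ∧ k = ((0,0) : Fin n × Fin 2)
    then 1
  else if i = ((1,1) : Fin n × Fin 2) ∧ j = ((0,0) : Fin n × Fin 2) ∧ k = ((0,1) : Fin n × Fin 2)
    then 1
  else if i = ((1,1) : Fin n × Fin 2) ∧ j = ((0,1) : Fin n × Fin 2) ∧ k = ((0,0) : Fin n × Fin 2)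
    then -1
  else if i = ((1,0) : Fin n × Fin 2) ∧ j = ((0,1) : Fin n × Fin 2) ∧ k = ((0,1) : Fin n × Fin 2)
    then 1
  else 0

-- J evaluation lemmas
lemma J1 (m : ℕ) (k : Fin (m+2) × Fin 2) :
    Jstd17 (m+2) ((0,0) : Fin (m+2) × Fin 2) k = if k = ((0,1) : Fin (m+2) × Fin 2) then -1 else 0 := by
  obtain ⟨k1, k2⟩ := k
  fin_cases k2 <;> simp [Jstd17, Prod.ext_iff, eq_comm]
lemma J2 (m : ℕ) (k : Fin (m+2) × Fin 2) :
    Jstd17 (m+2) ((0,1) : Fin (m+2) × Fin 2) k = if k = ((0,0) : Fin (m+2) × Fin 2) then 1 else 0 := by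
  obtain ⟨k1, k2⟩ := k
  fin_cases k2 <;> simp [Jstd17, Prod.ext_iff, eq_comm]
lemma J3 (m : ℕ) (i : Fin (m+2) × Fin 2) :
    Jstd17 (m+2) i ((1,0) : Fin (m+2) × Fin 2) = if i = ((1,1) : Fin (m+2) × Fin 2) then 1 else 0 := by
  obtain ⟨i1, i2⟩ := i
  fin_cases i2 <;> simp [Jstd17, Prod.ext_iff]
lemma J4 (m : ℕ) (i : Fin (m+2) × Fin 2) :
    Jstd17 (m+2) i ((1,1) : Fin (m+2) × Fin 2) = if i = ((1,0) : Fin (m+2) × Fin 2) then -1 else 0 := by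
  obtain ⟨i1, i2⟩ := i
  fin_cases i2 <;> simp [Jstd17, Prod.ext_iff]

lemma gam_decomp (m : ℕ) (i j k : Fin (m+2) × Fin 2) : Gam17 (m+2) i j k =
    (if i = ((1,0) : Fin (m+2) × Fin 2) ∧ j = ((0,0) : Fin (m+2) × Fin 2) then 1 else 0) *
      (if k = ((0,0) : Fin (m+2) × Fin 2) then 1 else 0)
  + (if i = ((1,1) : Fin (m+2) × Fin 2) ∧ j = ((0,0) : Fin (m+2) × Fin 2) then 1 else 0) *
      (if k = ((0,1) : Fin (m+2) × Fin 2) then 1 else 0)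
  - (if i = ((1,1) : Fin (m+2) × Fin 2) ∧ j = ((0,1) : Fin (m+2) × Fin 2) then 1 else 0) *
      (if k = ((0,0) : Fin (m+2) × Fin 2) then 1 else 0)
  + (if i = ((1,0) : Fin (m+2) × Fin 2) ∧ j = ((0,1) : Fin (m+2) × Fin 2) then 1 else 0) *
      (if k = ((0,1) : Fin (m+2) × Fin 2) then 1 else 0) := by
  obtain ⟨i1, i2⟩ := i; obtain ⟨j1, j2⟩ := j; obtain ⟨k1, k2⟩ := k
  fin_cases i2 <;> fin_cases j2 <;> fin_cases k2 <;>
    simp [Gam17, Prod.ext_iff] <;> split_ifs <;> simp_all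

lemma gam_decomp' (m : ℕ) (l j k : Fin (m+2) × Fin 2) : Gam17 (m+2) l j k =
    (if j = ((0,0) : Fin (m+2) × Fin 2) ∧ k = ((0,0) : Fin (m+2) × Fin 2) then 1 else 0) *
      (if l = ((1,0) : Fin (m+2) × Fin 2) then 1 else 0)
  + (if j = ((0,0) : Fin (m+2) × Fin 2) ∧ k = ((0,1) : Fin (m+2) × Fin 2) then 1 else 0) *
      (if l = ((1,1) : Fin (m+2) × Fin 2) then 1 else 0)
  - (if j = ((0,1) : Fin (m+2) × Fin 2) ∧ k = ((0,0) : Fin (m+2) × Fin 2) then 1 else 0) *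
      (if l = ((1,1) : Fin (m+2) × Fin 2) then 1 else 0)
  + (if j = ((0,1) : Fin (m+2) × Fin 2) ∧ k = ((0,1) : Fin (m+2) × Fin 2) then 1 else 0) *
      (if l = ((1,0) : Fin (m+2) × Fin 2) then 1 else 0) := by
  obtain ⟨i1, i2⟩ := l; obtain ⟨j1, j2⟩ := j; obtain ⟨k1, k2⟩ := k
  fin_cases i2 <;> fin_cases j2 <;> fin_cases k2 <;>
    simp [Gam17, Prod.ext_iff] <;> split_ifs <;> simp_all

lemma sum_indL {α : Type*} [Fintype α] [DecidableEq α] (c : α) (A : ℝ) (f : α → ℝ) :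
    ∑ l, A * (if l = c then (1:ℝ) else 0) * f l = A * f c := by
  have h : ∀ l, A * (if l = c then (1:ℝ) else 0) * f l = if l = c then A * f l else 0 := by
    intro l; split_ifs <;> simp
  simp [h, Finset.sum_ite_eq']

lemma sum_indR {α : Type*} [Fintype α] [DecidableEq α] (c : α) (A : ℝ) (f : α → ℝ) :
    ∑ l, f l * (A * (if l = c then (1:ℝ) else 0)) = f c * A := by
  have h : ∀ l, f l * (A * (if l = c then (1:ℝ) else 0)) = if l = c then f l * A else 0 := by
    intro l; split_ifs <;> simp
  simp [h, Finset.sum_ite_eq']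

lemma part1 (m : ℕ) (i j k : Fin (m+2) × Fin 2) :
    ∑ l, Gam17 (m+2) i j l * Jstd17 (m+2) l k = ∑ l, Jstd17 (m+2) i l * Gam17 (m+2) l j k := by
  have hL : ∑ l, Gam17 (m+2) i j l * Jstd17 (m+2) l k
      = (if i = ((1,0) : Fin (m+2) × Fin 2) ∧ j = ((0,0) : Fin (m+2) × Fin 2) then 1 else 0) *
          Jstd17 (m+2) ((0,0) : Fin (m+2) × Fin 2) k
      + (if i = ((1,1) : Fin (m+2) × Fin 2) ∧ j = ((0,0) : Fin (m+2) × Fin 2) then 1 else 0) *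
          Jstd17 (m+2) ((0,1) : Fin (m+2) × Fin 2) k
      - (if i = ((1,1) : Fin (m+2) × Fin 2) ∧ j = ((0,1) : Fin (m+2) × Fin 2) then 1 else 0) *
          Jstd17 (m+2) ((0,0) : Fin (m+2) × Fin 2) k
      + (if i = ((1,0) : Fin (m+2) × Fin 2) ∧ j = ((0,1) : Fin (m+2) × Fin 2) then 1 else 0) *
          Jstd17 (m+2) ((0,1) : Fin (m+2) × Fin 2) k := by
    simp only [fun l => gam_decomp m i j l, add_mul, sub_mul,
      Finset.sum_add_distrib, Finset.sum_sub_distrib, sum_indL]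
  have hR : ∑ l, Jstd17 (m+2) i l * Gam17 (m+2) l j k
      = Jstd17 (m+2) i ((1,0) : Fin (m+2) × Fin 2) *
          (if j = ((0,0) : Fin (m+2) × Fin 2) ∧ k = ((0,0) : Fin (m+2) × Fin 2) then 1 else 0)
      + Jstd17 (m+2) i ((1,1) : Fin (m+2) × Fin 2) *
          (if j = ((0,0) : Fin (m+2) × Fin 2) ∧ k = ((0,1) : Fin (m+2) × Fin 2) then 1 else 0)
      - Jstd17 (m+2) i ((1,1) : Fin (m+2) × Fin 2) *
          (if j = ((0,1) : Fin (m+2) × Fin 2) ∧ k = ((0,0) : Fin (m+2) × Fin 2) then 1 else 0)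
      + Jstd17 (m+2) i ((1,0) : Fin (m+2) × Fin 2) *
          (if j = ((0,1) : Fin (m+2) × Fin 2) ∧ k = ((0,1) : Fin (m+2) × Fin 2) then 1 else 0) := by
    simp only [fun l => gam_decomp' m l j k, mul_add, mul_sub,
      Finset.sum_add_distrib, Finset.sum_sub_distrib, sum_indR]
  rw [hL, hR, J1, J2, J3, J4]
  obtain ⟨i1, i2⟩ := i; obtain ⟨j1, j2⟩ := j; obtain ⟨k1, k2⟩ := k
  fin_cases i2 <;> fin_cases j2 <;> fin_cases k2 <;>
    simp [Prod.ext_iff] <;> split_ifs <;> simp_all <;> ring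

-- part 2 pieces
lemma gam_thirdzero (m : ℕ) (i k s : Fin (m+2) × Fin 2) (h : s.1 ≠ 0) :
    Gam17 (m+2) i k s = 0 := by
  simp [Gam17, Prod.ext_iff, h]

lemma gam_firstzero (m : ℕ) (s l j : Fin (m+2) × Fin 2) (h : s.1 = 0) :
    Gam17 (m+2) s l j = 0 := by
  simp [Gam17, Prod.ext_iff, h]

lemma gam_mul_gam (m : ℕ) (i k s l j : Fin (m+2) × Fin 2) :
    Gam17 (m+2) i k s * Gam17 (m+2) s l j = 0 := by
  by_cases h : s.1 = 0
  · rw [gam_firstzero m s l j h, mul_zero]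
  · rw [gam_thirdzero m i k s h, zero_mul]

-- part 3
lemma part3 (m : ℕ) (i j k : Fin (m+2) × Fin 2) :
    Gam17 (m+2) i j k - Gam17 (m+2) i k j =
      if i = ((1,1) : Fin (m+2) × Fin 2) ∧ j = ((0,0) : Fin (m+2) × Fin 2)
          ∧ k = ((0,1) : Fin (m+2) × Fin 2) then 2
      else if i = ((1,1) : Fin (m+2) × Fin 2) ∧ j = ((0,1) : Fin (m+2) × Fin 2)
          ∧ k = ((0,0) : Fin (m+2) × Fin 2) then -2
      else 0 := by
  obtain ⟨i1, i2⟩ := i; obtain ⟨j1, j2⟩ := j; obtain ⟨k1, k2⟩ := k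
  fin_cases i2 <;> fin_cases j2 <;> fin_cases k2 <;>
    simp [Gam17, Prod.ext_iff] <;> split_ifs <;> simp_all <;> norm_num

-- torsion indicator decomposition
lemma tau_decomp (m : ℕ) (i j k : Fin (m+2) × Fin 2) :
    Gam17 (m+2) i j k - Gam17 (m+2) i k j =
      (if i = ((1,1) : Fin (m+2) × Fin 2) then (1:ℝ) else 0) * 2 *
        ((if j = ((0,0) : Fin (m+2) × Fin 2) then (1:ℝ) else 0) *
         (if k = ((0,1) : Fin (m+2) × Fin 2) then (1:ℝ) else 0))
    - (if i = ((1,1) : Fin (m+2) × Fin 2) then (1:ℝ) else 0) * 2 *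
        ((if j = ((0,1) : Fin (m+2) × Fin 2) then (1:ℝ) else 0) *
         (if k = ((0,0) : Fin (m+2) × Fin 2) then (1:ℝ) else 0)) := by
  rw [part3]
  obtain ⟨i1, i2⟩ := i; obtain ⟨j1, j2⟩ := j; obtain ⟨k1, k2⟩ := k
  fin_cases i2 <;> fin_cases j2 <;> fin_cases k2 <;>
    simp [Prod.ext_iff] <;> split_ifs <;> simp_all <;> norm_num

-- J row evaluation
lemma J5 (m : ℕ) (p l : Fin (m+2) × Fin 2) :
    Jstd17 (m+2) p l =
      if p.2 = 1 then (if l = ((p.1, 0) : Fin (m+2) × Fin 2) then (1:ℝ) else 0)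
      else -(if l = ((p.1, 1) : Fin (m+2) × Fin 2) then (1:ℝ) else 0) := by
  obtain ⟨a, b⟩ := p; obtain ⟨l1, l2⟩ := l
  fin_cases b <;> fin_cases l2 <;>
    simp [Jstd17, Prod.ext_iff, eq_comm] <;> split_ifs <;> norm_num

lemma sum_e {α : Type*} [Fintype α] [DecidableEq α] (a : α) (u : α → ℝ) :
    ∑ l, (if l = a then (1:ℝ) else 0) * u l = u a := by
  simp [ite_mul, Finset.sum_ite_eq']

lemma dsum {α : Type*} [Fintype α] [DecidableEq α] (a b : α) (f : α → α → ℝ) :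
    ∑ j, ∑ k, (if j = a ∧ k = b then f j k else 0) = f a b := by
  rw [Finset.sum_eq_single a (fun j _ hj => by simp [hj]) (by simp)]
  rw [Finset.sum_eq_single b (fun k _ hk => by simp [hk]) (by simp)]
  simp

/-- the connection with `Γ²_{1̄1} = Γ^{2̄}_{11̄} = 1` on `ℂⁿ` (`n ≥ 2`) is a
complex connection, is flat (vanishing curvature), and its torsion equals
`dz¹ ∧ dz̄¹ ⊗ (∂_{z̄²} - ∂_{z²})` (`= 2 dx₁∧dy₁ ⊗ ∂_{y₂}` in real coordinates), which is of
pure mixed (antilinear,linear) type: its `(++)` and `(--)` components vanish. -/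
theorem submaximal_cprojective_stmt17 (n : ℕ) (hn : 2 ≤ n) :
    haveI : NeZero n := ⟨by omega⟩
    -- ∇J = 0 (complex connection), at the level of the (constant) Christoffel symbols:
    (∀ i j k : Fin n × Fin 2,
      ∑ l, Gam17 n i j l * Jstd17 n l k = ∑ l, Jstd17 n i l * Gam17 n l j k) ∧
    -- the curvature R^i_{jkl} = ∂_k Γ^i_{lj} - ∂_l Γ^i_{kj} + Γ^i_{ks}Γ^s_{lj} - Γ^i_{ls}Γ^s_{kj}
    -- vanishes identically:
    (∀ (i j k l : Fin n × Fin 2) (p : Fin n × Fin 2 → ℝ),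
      pder17 k (fun _ => Gam17 n i l j) p - pder17 l (fun _ => Gam17 n i k j) p
        + ∑ s, (Gam17 n i k s * Gam17 n s l j - Gam17 n i l s * Gam17 n s k j) = 0) ∧
    -- the torsion T^i_{jk} = Γ^i_{jk} - Γ^i_{kj} equals 2 dx₁∧dy₁ ⊗ ∂_{y₂},
    -- the real form of dz¹ ∧ dz̄¹ ⊗ (∂_{z̄²} - ∂_{z²}):
    (∀ i j k : Fin n × Fin 2, Gam17 n i j k - Gam17 n i k j =
      if i = ((1,1) : Fin n × Fin 2) ∧ j = ((0,0) : Fin n × Fin 2) ∧ k = ((0,1) : Fin n × Fin 2)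
        then 2
      else if i = ((1,1) : Fin n × Fin 2) ∧ j = ((0,1) : Fin n × Fin 2) ∧ k = ((0,0) : Fin n × Fin 2)
        then -2
      else 0) ∧
    -- the torsion is of mixed (antilinear, linear) type: with
    -- T(u,v)ⁱ = Σ (Γ^i_{jk}-Γ^i_{kj}) uʲ vᵏ and (Ju)ⁱ = Σ Jⁱ_l uˡ, both the (++) part
    -- T(u,v) - J T(Ju,v) - J T(u,Jv) - T(Ju,Jv) and the (--) part
    -- T(u,v) + J T(Ju,v) + J T(u,Jv) - T(Ju,Jv) vanish:
    (∀ (T : (Fin n × Fin 2 → ℝ) → (Fin n × Fin 2 → ℝ) → (Fin n × Fin 2 → ℝ))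
       (Jv : (Fin n × Fin 2 → ℝ) → (Fin n × Fin 2 → ℝ)),
      (∀ u v i, T u v i = ∑ j, ∑ k, (Gam17 n i j k - Gam17 n i k j) * u j * v k) →
      (∀ u i, Jv u i = ∑ l, Jstd17 n i l * u l) →
      ∀ u v, (T u v - Jv (T (Jv u) v) - Jv (T u (Jv v)) - T (Jv u) (Jv v) = 0 ∧
              T u v + Jv (T (Jv u) v) + Jv (T u (Jv v)) - T (Jv u) (Jv v) = 0)) := by
  
  obtain ⟨m, rfl⟩ : ∃ m, n = m + 2 := ⟨n - 2, by omega⟩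
  refine ⟨part1 m, ?_, part3 m, ?_⟩
  · intro i j k l p
    have hc : ∀ (c : ℝ) (k : Fin (m+2) × Fin 2) (p : Fin (m+2) × Fin 2 → ℝ),
        pder17 k (fun _ => c) p = 0 := by
      intro c k p; simp [pder17]
    rw [hc, hc]
    simp [gam_mul_gam]
  · intro T Jv hT hJ u v
    have hT2 : ∀ u v (i : Fin (m+2) × Fin 2), T u v i =
        if i = ((1,1) : Fin (m+2) × Fin 2)
        then 2 * (u ((0,0) : Fin (m+2) × Fin 2) * v ((0,1) : Fin (m+2) × Fin 2))
             - 2 * (u ((0,1) : Fin (m+2) × Fin 2) * v ((0,0) : Fin (m+2) × Fin 2)) else 0 := by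
      intro u v i
      rw [hT]
      have step : ∀ j k : Fin (m+2) × Fin 2,
          (Gam17 (m+2) i j k - Gam17 (m+2) i k j) * u j * v k =
          (if j = ((0,0) : Fin (m+2) × Fin 2) ∧ k = ((0,1) : Fin (m+2) × Fin 2) then
            (if i = ((1,1) : Fin (m+2) × Fin 2) then (2:ℝ) else 0) * u j * v k else 0)
        + (if j = ((0,1) : Fin (m+2) × Fin 2) ∧ k = ((0,0) : Fin (m+2) × Fin 2) then
            (if i = ((1,1) : Fin (m+2) × Fin 2) then (-2:ℝ) else 0) * u j * v k else 0) := by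
        intro j k
        rw [part3]
        split_ifs <;> simp_all [Prod.ext_iff] <;> ring
      simp only [step, Finset.sum_add_distrib, dsum]
      split_ifs <;> ring
    have hJ2 : ∀ (w : Fin (m+2) × Fin 2 → ℝ) (p : Fin (m+2) × Fin 2),
        Jv w p = if p.2 = 1 then w ((p.1, 0) : Fin (m+2) × Fin 2)
                 else -w ((p.1, 1) : Fin (m+2) × Fin 2) := by
      intro w p
      rw [hJ]
      by_cases hb : p.2 = (1 : Fin 2)
      · simp only [J5, hb, if_true, sum_e, if_pos]
      · simp only [J5, hb, if_false, if_neg hb, neg_mul, Finset.sum_neg_distrib, sum_e]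
    constructor <;> funext p <;>
      simp only [Pi.sub_apply, Pi.add_apply, Pi.zero_apply, hT2, hJ2] <;>
      by_cases h1 : p.1 = (1 : Fin (m+2)) <;> by_cases h2 : p.2 = (1 : Fin 2) <;>
      simp [h1, h2, Prod.ext_iff] <;>
      first
        | ring
        | (split_ifs <;> simp_all <;> ring)
        | simp_all
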